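/- Let K be a convex body in ℝⁿ containing the origin in its interior, and suppose there exist a homogeneous polynomial P of degree 1 and a homogeneous polynomial Q of degree 2 such that ‖x‖_K − ‖−x‖_K = P(x) and ‖x‖_K² + ‖−x‖_K² = Q(x) for all x ∈ ℝⁿ. Then ‖x‖_K = (1/2)(P(x) + √(2Q(x) − P(x)²)) for all x, and K is an ellipsoid. -/

import Mathlib

open MvPolynomial

open scoped RealInnerProductSpace

/-! ### Auxiliary lemmas on homogeneous polynomials of degree 1 and 2 -/

lemma degree_one_classify {n : ℕ} (d : Fin n →₀ ℕ) (hd : (Finsupp.weight 1) d = 1) :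
    ∃ a, d = Finsupp.single a 1 := by
  have hsum : (d.sum fun _ k => k) = 1 := by
    simpa [Finsupp.weight_apply, Finsupp.sum] using hd
  have hc : Multiset.card d.toMultiset = 1 := by
    rw [Finsupp.card_toMultiset]; exact hsum
  obtain ⟨a, hs⟩ := Multiset.card_eq_one.1 hc
  refine ⟨a, ?_⟩
  have h := congrArg Multiset.toFinsupp hs
  rwa [Finsupp.toMultiset_toFinsupp, Multiset.toFinsupp_singleton] at h

lemma degree_two_classify {n : ℕ} (d : Fin n →₀ ℕ) (hd : (Finsupp.weight 1) d = 2) :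
    ∃ a b, d = Finsupp.single a 1 + Finsupp.single b 1 := by
  have hsum : (d.sum fun _ k => k) = 2 := by
    simpa [Finsupp.weight_apply, Finsupp.sum] using hd
  have hc : Multiset.card d.toMultiset = 2 := by
    rw [Finsupp.card_toMultiset]; exact hsum
  obtain ⟨a, b, hs⟩ := Multiset.card_eq_two.1 hc
  refine ⟨a, b, ?_⟩
  have h := congrArg Multiset.toFinsupp hs
  rwa [Finsupp.toMultiset_toFinsupp,
    show ({a, b} : Multiset (Fin n)) = {a} + {b} from rfl,
    Multiset.toFinsupp_add, Multiset.toFinsupp_singleton, Multiset.toFinsupp_singleton] at h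

lemma eval_monomial_single {n : ℕ} (a : Fin n) (c : ℝ) (v : Fin n → ℝ) :
    eval v (monomial (Finsupp.single a 1) c) = c * v a := by
  simp [eval_monomial]

lemma eval_monomial_pair {n : ℕ} (a b : Fin n) (c : ℝ) (v : Fin n → ℝ) :
    eval v (monomial (Finsupp.single a 1 + Finsupp.single b 1) c) = c * (v a * v b) := by
  rw [eval_monomial, Finsupp.prod_add_index' (fun i => pow_zero (v i)) (fun i => pow_add (v i))]
  simp

section aux
variable {n : ℕ} (S : Finset (Fin n →₀ ℕ)) (φ : (Fin n →₀ ℕ) → ℝ)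

lemma aux1_add (hS : ∀ d ∈ S, (Finsupp.weight 1) d = 1) (v w : Fin n → ℝ) :
    eval (v + w) (∑ d ∈ S, monomial d (φ d)) =
      eval v (∑ d ∈ S, monomial d (φ d)) + eval w (∑ d ∈ S, monomial d (φ d)) := by
  rw [map_sum, map_sum, map_sum, ← Finset.sum_add_distrib]
  refine Finset.sum_congr rfl fun d hd => ?_
  obtain ⟨a, rfl⟩ := degree_one_classify d (hS d hd)
  simp only [eval_monomial_single, Pi.add_apply]
  ring

lemma aux1_smul (hS : ∀ d ∈ S, (Finsupp.weight 1) d = 1) (c : ℝ) (v : Fin n → ℝ) :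
    eval (c • v) (∑ d ∈ S, monomial d (φ d)) = c * eval v (∑ d ∈ S, monomial d (φ d)) := by
  rw [map_sum, map_sum, Finset.mul_sum]
  refine Finset.sum_congr rfl fun d hd => ?_
  obtain ⟨a, rfl⟩ := degree_one_classify d (hS d hd)
  simp only [eval_monomial_single, Pi.smul_apply, smul_eq_mul]
  ring

lemma aux2_par (hS : ∀ d ∈ S, (Finsupp.weight 1) d = 2) (v w : Fin n → ℝ) :
    eval (v + w) (∑ d ∈ S, monomial d (φ d)) + eval (v - w) (∑ d ∈ S, monomial d (φ d)) =
      2 * eval v (∑ d ∈ S, monomial d (φ d)) + 2 * eval w (∑ d ∈ S, monomial d (φ d)) := by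
  rw [map_sum, map_sum, map_sum, map_sum, ← Finset.sum_add_distrib,
    Finset.mul_sum, Finset.mul_sum, ← Finset.sum_add_distrib]
  refine Finset.sum_congr rfl fun d hd => ?_
  obtain ⟨a, b, rfl⟩ := degree_two_classify d (hS d hd)
  simp only [eval_monomial_pair, Pi.add_apply, Pi.sub_apply]
  ring

lemma aux2_smul (hS : ∀ d ∈ S, (Finsupp.weight 1) d = 2) (c : ℝ) (v : Fin n → ℝ) :
    eval (c • v) (∑ d ∈ S, monomial d (φ d)) = c ^ 2 * eval v (∑ d ∈ S, monomial d (φ d)) := by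
  rw [map_sum, map_sum, Finset.mul_sum]
  refine Finset.sum_congr rfl fun d hd => ?_
  obtain ⟨a, b, rfl⟩ := degree_two_classify d (hS d hd)
  simp only [eval_monomial_pair, Pi.smul_apply, smul_eq_mul]
  ring

lemma aux2_polar (hS : ∀ d ∈ S, (Finsupp.weight 1) d = 2) (c : ℝ) (v w : Fin n → ℝ) :
    eval (c • v + w) (∑ d ∈ S, monomial d (φ d)) =
      c ^ 2 * eval v (∑ d ∈ S, monomial d (φ d)) + eval w (∑ d ∈ S, monomial d (φ d)) +
        c * (eval (v + w) (∑ d ∈ S, monomial d (φ d)) - eval v (∑ d ∈ S, monomial d (φ d)) -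
          eval w (∑ d ∈ S, monomial d (φ d))) := by
  rw [map_sum, map_sum, map_sum, map_sum]
  simp only [Finset.mul_sum, ← Finset.sum_sub_distrib, ← Finset.sum_add_distrib]
  refine Finset.sum_congr rfl fun d hd => ?_
  obtain ⟨a, b, rfl⟩ := degree_two_classify d (hS d hd)
  simp only [eval_monomial_pair, Pi.add_apply, Pi.smul_apply, smul_eq_mul]
  ring

end aux

lemma homog1_add {n : ℕ} {P : MvPolynomial (Fin n) ℝ} (hP : P.IsHomogeneous 1)
    (v w : Fin n → ℝ) : eval (v + w) P = eval v P + eval w P := by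
  rw [show P = ∑ d ∈ P.support, monomial d (coeff d P) from P.as_sum]
  exact aux1_add _ _ (fun d hd => hP (mem_support_iff.mp hd)) v w

lemma homog1_smul {n : ℕ} {P : MvPolynomial (Fin n) ℝ} (hP : P.IsHomogeneous 1)
    (c : ℝ) (v : Fin n → ℝ) : eval (c • v) P = c * eval v P := by
  rw [show P = ∑ d ∈ P.support, monomial d (coeff d P) from P.as_sum]
  exact aux1_smul _ _ (fun d hd => hP (mem_support_iff.mp hd)) c v

lemma homog2_parallelogram {n : ℕ} {Q : MvPolynomial (Fin n) ℝ} (hQ : Q.IsHomogeneous 2)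
    (v w : Fin n → ℝ) :
    eval (v + w) Q + eval (v - w) Q = 2 * eval v Q + 2 * eval w Q := by
  rw [show Q = ∑ d ∈ Q.support, monomial d (coeff d Q) from Q.as_sum]
  exact aux2_par _ _ (fun d hd => hQ (mem_support_iff.mp hd)) v w

lemma homog2_smul {n : ℕ} {Q : MvPolynomial (Fin n) ℝ} (hQ : Q.IsHomogeneous 2)
    (c : ℝ) (v : Fin n → ℝ) : eval (c • v) Q = c ^ 2 * eval v Q := by
  rw [show Q = ∑ d ∈ Q.support, monomial d (coeff d Q) from Q.as_sum]
  exact aux2_smul _ _ (fun d hd => hQ (mem_support_iff.mp hd)) c v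

lemma homog2_polar {n : ℕ} {Q : MvPolynomial (Fin n) ℝ} (hQ : Q.IsHomogeneous 2)
    (c : ℝ) (v w : Fin n → ℝ) :
    eval (c • v + w) Q =
      c ^ 2 * eval v Q + eval w Q + c * (eval (v + w) Q - eval v Q - eval w Q) := by
  rw [show Q = ∑ d ∈ Q.support, monomial d (coeff d Q) from Q.as_sum]
  exact aux2_polar _ _ (fun d hd => hQ (mem_support_iff.mp hd)) c v w

/-! ### A positive definite quadratic function is the square norm under a linear equivalence -/

def Esyn (n : ℕ) : Type := EuclideanSpace ℝ (Fin n)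

lemma exists_linear_equiv_of_quadratic {n : ℕ} (C : EuclideanSpace ℝ (Fin n) → ℝ)
    (hpar : ∀ x y, C (x + y) + C (x - y) = 2 * C x + 2 * C y)
    (hsmul : ∀ (c : ℝ) (x), C (c • x) = c ^ 2 * C x)
    (hnonneg : ∀ x, 0 ≤ C x)
    (hdef : ∀ x, C x = 0 → x = 0)
    (hsub : ∀ x y, Real.sqrt (C (x + y)) ≤ Real.sqrt (C x) + Real.sqrt (C y)) :
    ∃ A : EuclideanSpace ℝ (Fin n) ≃ₗ[ℝ] EuclideanSpace ℝ (Fin n),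
      ∀ x, C x = ‖A x‖ ^ 2 := by
  letI instAG : AddCommGroup (Esyn n) :=
    inferInstanceAs (AddCommGroup (EuclideanSpace ℝ (Fin n)))
  letI instMod : Module ℝ (Esyn n) :=
    inferInstanceAs (Module ℝ (EuclideanSpace ℝ (Fin n)))
  have hneg : ∀ x : EuclideanSpace ℝ (Fin n), C (-x) = C x := fun x => by
    rw [← neg_one_smul ℝ x, hsmul]; ring
  letI N : AddGroupNorm (Esyn n) :=
    { toFun := fun x => Real.sqrt (C x)
      map_zero' := by
        have : C 0 = 0 := by
          have := hsmul 0 0; simpa using this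
        exact (congrArg Real.sqrt this).trans Real.sqrt_zero
      add_le' := hsub
      neg' := fun x => congrArg Real.sqrt (hneg x)
      eq_zero_of_map_eq_zero' := fun x hx => by
        have : C x = 0 := by
          have := Real.sqrt_eq_zero (hnonneg x) |>.mp hx
          exact this
        exact hdef x this }
  letI instNorm : NormedAddCommGroup (Esyn n) := N.toNormedAddCommGroup
  have hnormdef : ∀ x : Esyn n, ‖x‖ = Real.sqrt (C x) := fun x => rfl
  letI instNS : NormedSpace ℝ (Esyn n) :=
    { norm_smul_le := fun c x => by
        rw [hnormdef, hnormdef]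
        rw [show ((c • x : Esyn n) : EuclideanSpace ℝ (Fin n)) = c • x from rfl]
        have hs : Real.sqrt (C (c • x)) = Real.sqrt (c ^ 2 * C x) := congrArg Real.sqrt (hsmul c x)
        rw [hs, Real.sqrt_mul (sq_nonneg c), Real.sqrt_sq_eq_abs]
        exact le_of_eq (by rw [Real.norm_eq_abs]) }
  letI instIP : InnerProductSpace ℝ (Esyn n) :=
    InnerProductSpace.ofNorm ℝ (fun x y => by
      have e1 : ∀ z : Esyn n, ‖z‖ * ‖z‖ = C z := fun z => by
        rw [hnormdef]; exact Real.mul_self_sqrt (hnonneg z)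
      rw [e1, e1, e1, e1]
      exact (hpar x y).trans (by ring))
  letI instFD : FiniteDimensional ℝ (Esyn n) :=
    inferInstanceAs (FiniteDimensional ℝ (EuclideanSpace ℝ (Fin n)))
  have hrank : Module.finrank ℝ (Esyn n) = n := finrank_euclideanSpace_fin
  let b := (stdOrthonormalBasis ℝ (Esyn n)).reindex (finCongr hrank)
  let L : Esyn n ≃ₗᵢ[ℝ] EuclideanSpace ℝ (Fin n) := b.repr
  have key : ∀ z : Esyn n, C z = ‖z‖ ^ 2 := fun z => by
    rw [hnormdef, Real.sq_sqrt (hnonneg z)]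
  refine ⟨L.toLinearEquiv, fun x => ?_⟩
  rw [key x]
  exact (congrArg (· ^ 2) (L.norm_map x)).symm

/-! ### Main theorem -/

/-- `K ⊆ ℝⁿ` is an ellipsoid: the image of the closed Euclidean unit ball under an
invertible affine transformation. -/
def IsEllipsoid {n : ℕ} (K : Set (EuclideanSpace ℝ (Fin n))) : Prop :=
  ∃ T : EuclideanSpace ℝ (Fin n) ≃ᵃ[ℝ] EuclideanSpace ℝ (Fin n),
    K = T '' Metric.closedBall 0 1

theorem convex_body_from_two_polynomial_identities (n : ℕ)
    (K : Set (EuclideanSpace ℝ (Fin n)))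
    (hcomp : IsCompact K) (hconv : Convex ℝ K)
    (h0 : (0 : EuclideanSpace ℝ (Fin n)) ∈ interior K)
    (P Q : MvPolynomial (Fin n) ℝ)
    (hP : P.IsHomogeneous 1) (hQ : Q.IsHomogeneous 2)
    (h1 : ∀ x : EuclideanSpace ℝ (Fin n),
      gauge K x - gauge K (-x) = eval (fun i => x i) P)
    (h2 : ∀ x : EuclideanSpace ℝ (Fin n),
      gauge K x ^ 2 + gauge K (-x) ^ 2 = eval (fun i => x i) Q) :
    (∀ x : EuclideanSpace ℝ (Fin n),
      gauge K x = (1 / 2) * (eval (fun i => x i) P +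
        Real.sqrt (2 * eval (fun i => x i) Q - (eval (fun i => x i) P) ^ 2))) ∧
    IsEllipsoid K := by
  classical
  set f : (EuclideanSpace ℝ (Fin n)) → ℝ := gauge K with hf
  set p : (EuclideanSpace ℝ (Fin n)) → ℝ := fun x => eval (fun i => x i) P with hp
  set q : (EuclideanSpace ℝ (Fin n)) → ℝ := fun x => eval (fun i => x i) Q with hq
  -- basic gauge facts
  have hK0 : K ∈ nhds (0 : (EuclideanSpace ℝ (Fin n))) := mem_interior_iff_mem_nhds.1 h0
  have habs : Absorbent ℝ K := absorbent_nhds_zero hK0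
  have hbd : Bornology.IsVonNBounded ℝ K := (NormedSpace.isVonNBounded_iff ℝ).2 hcomp.isBounded
  have hfnn : ∀ x : (EuclideanSpace ℝ (Fin n)), 0 ≤ f x := fun x => gauge_nonneg x
  have hgz : ∀ x : (EuclideanSpace ℝ (Fin n)), f x = 0 → x = 0 := fun x hx => (gauge_eq_zero habs hbd).1 hx
  have hmem : ∀ x : (EuclideanSpace ℝ (Fin n)), x ∈ K ↔ f x ≤ 1 := fun x => by
    rw [hf, gauge_le_one_iff_mem_closure hconv hK0, hcomp.isClosed.closure_eq]
  have hfadd : ∀ x y : (EuclideanSpace ℝ (Fin n)), f (x + y) ≤ f x + f y := fun x y => gauge_add_le hconv habs x y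
  -- polynomial facts transported to (EuclideanSpace ℝ (Fin n))
  have hpadd : ∀ x y : (EuclideanSpace ℝ (Fin n)), p (x + y) = p x + p y := fun x y => homog1_add hP x y
  have hpsmul : ∀ (c : ℝ) (x : (EuclideanSpace ℝ (Fin n))), p (c • x) = c * p x := fun c x => homog1_smul hP c x
  have hpneg : ∀ x : (EuclideanSpace ℝ (Fin n)), p (-x) = -p x := fun x => by
    rw [← neg_one_smul ℝ x, hpsmul]; ring
  have hpsub : ∀ x y : (EuclideanSpace ℝ (Fin n)), p (x - y) = p x - p y := fun x y => by
    rw [sub_eq_add_neg, hpadd, hpneg]; ring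
  have hqpar : ∀ x y : (EuclideanSpace ℝ (Fin n)), q (x + y) + q (x - y) = 2 * q x + 2 * q y := fun x y =>
    homog2_parallelogram hQ x y
  have hqsmul : ∀ (c : ℝ) (x : (EuclideanSpace ℝ (Fin n))), q (c • x) = c ^ 2 * q x := fun c x => homog2_smul hQ c x
  have hqpolar : ∀ (c : ℝ) (x y : (EuclideanSpace ℝ (Fin n))),
      q (c • x + y) = c ^ 2 * q x + q y + c * (q (x + y) - q x - q y) := fun c x y =>
    homog2_polar hQ c x y
  -- the key square identity
  have hsq : ∀ x : (EuclideanSpace ℝ (Fin n)), (f x + f (-x)) ^ 2 = 2 * q x - p x ^ 2 := fun x => by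
    simp only [hp, hq]; rw [← h1 x, ← h2 x]; ring
  have hsqrt : ∀ x : (EuclideanSpace ℝ (Fin n)), Real.sqrt (2 * q x - p x ^ 2) = f x + f (-x) := fun x => by
    rw [← hsq x, Real.sqrt_sq (add_nonneg (hfnn x) (hfnn (-x)))]
  have part1 : ∀ x : (EuclideanSpace ℝ (Fin n)),
      f x = (1 / 2) * (p x + Real.sqrt (2 * q x - p x ^ 2)) := fun x => by
    rw [hsqrt x]
    simp only [hp]
    rw [← h1 x]; ring
  refine ⟨by simpa only [hp, hq] using part1, ?_⟩
  -- the quadratic form C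
  set C : (EuclideanSpace ℝ (Fin n)) → ℝ := fun x => 2 * q x - 2 * p x ^ 2 with hC
  have hCfg : ∀ x : (EuclideanSpace ℝ (Fin n)), C x = 4 * (f x * f (-x)) := fun x => by
    simp only [hC, hp, hq]; rw [← h1 x, ← h2 x]; ring
  have hCnn : ∀ x : (EuclideanSpace ℝ (Fin n)), 0 ≤ C x := fun x => by
    rw [hCfg x]
    have := mul_nonneg (hfnn x) (hfnn (-x)); linarith
  have hCdef : ∀ x : (EuclideanSpace ℝ (Fin n)), C x = 0 → x = 0 := fun x hx => by
    rw [hCfg x] at hx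
    have : f x * f (-x) = 0 := by linarith
    rcases mul_eq_zero.1 this with h | h
    · exact hgz x h
    · exact neg_eq_zero.mp (hgz (-x) h)
  have hCpar : ∀ x y : (EuclideanSpace ℝ (Fin n)), C (x + y) + C (x - y) = 2 * C x + 2 * C y := fun x y => by
    simp only [hC]
    rw [hpadd, hpsub]
    linear_combination 2 * hqpar x y
  have hCsmul : ∀ (c : ℝ) (x : (EuclideanSpace ℝ (Fin n))), C (c • x) = c ^ 2 * C x := fun c x => by
    simp only [hC]; rw [hqsmul, hpsmul]; ring
  have hCpolar : ∀ (t : ℝ) (x y : (EuclideanSpace ℝ (Fin n))),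
      C (x + t • y) = C y * t ^ 2 + (C (x + y) - C x - C y) * t + C x := fun t x y => by
    have h := hqpolar t y x
    have h' := congrArg p (add_comm x (t • y))
    have hq' := congrArg q (add_comm x (t • y))
    simp only [hC]
    rw [hq', h, hpadd, hpsmul, hpadd, add_comm y x]
    ring
  -- Cauchy–Schwarz via the discriminant
  have hCS : ∀ x y : (EuclideanSpace ℝ (Fin n)), C (x + y) ≤ (Real.sqrt (C x) + Real.sqrt (C y)) ^ 2 := by
    intro x y
    have hdisc : discrim (C y) (C (x + y) - C x - C y) (C x) ≤ 0 := by
      apply discrim_le_zero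
      intro t
      have := hCnn (x + t • y)
      rw [hCpolar t x y] at this
      nlinarith [this]
    rw [discrim] at hdisc
    have hb : C (x + y) - C x - C y ≤ 2 * Real.sqrt (C x) * Real.sqrt (C y) := by
      have h1' : (C (x + y) - C x - C y) ≤ |C (x + y) - C x - C y| := le_abs_self _
      have h2' : |C (x + y) - C x - C y| = Real.sqrt ((C (x + y) - C x - C y) ^ 2) :=
        (Real.sqrt_sq_eq_abs _).symm
      have h3' : ((C (x + y) - C x - C y)) ^ 2 ≤ 4 * (C x * C y) := by nlinarith [hdisc]
      calc C (x + y) - C x - C y ≤ Real.sqrt ((C (x + y) - C x - C y) ^ 2) := by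
            rw [← h2']; exact h1'
        _ ≤ Real.sqrt (4 * (C x * C y)) := Real.sqrt_le_sqrt h3'
        _ = 2 * Real.sqrt (C x) * Real.sqrt (C y) := by
            rw [show (4 : ℝ) * (C x * C y) = 2 ^ 2 * (C x * C y) by norm_num,
              Real.sqrt_mul (by positivity), Real.sqrt_sq (by norm_num : (0:ℝ) ≤ 2),
              Real.sqrt_mul (hCnn x)]
            ring
    have hx2 := Real.sq_sqrt (hCnn x)
    have hy2 := Real.sq_sqrt (hCnn y)
    nlinarith [hb]
  have hCsub : ∀ x y : (EuclideanSpace ℝ (Fin n)), Real.sqrt (C (x + y)) ≤ Real.sqrt (C x) + Real.sqrt (C y) := by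
    intro x y
    calc Real.sqrt (C (x + y)) ≤ Real.sqrt ((Real.sqrt (C x) + Real.sqrt (C y)) ^ 2) :=
          Real.sqrt_le_sqrt (hCS x y)
      _ = Real.sqrt (C x) + Real.sqrt (C y) :=
          Real.sqrt_sq (add_nonneg (Real.sqrt_nonneg _) (Real.sqrt_nonneg _))
  obtain ⟨A, hA⟩ := exists_linear_equiv_of_quadratic C hCpar hCsmul hCnn hCdef hCsub
  -- the linear functional p as an inner product
  let plin : (EuclideanSpace ℝ (Fin n)) →ₗ[ℝ] ℝ :=
    { toFun := p
      map_add' := hpadd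
      map_smul' := hpsmul }
  let ℓ : (EuclideanSpace ℝ (Fin n)) →L[ℝ] ℝ :=
    LinearMap.toContinuousLinearMap (plin.comp (A.symm : (EuclideanSpace ℝ (Fin n)) →ₗ[ℝ] (EuclideanSpace ℝ (Fin n))))
  set w : (EuclideanSpace ℝ (Fin n)) := (InnerProductSpace.toDual ℝ (EuclideanSpace ℝ (Fin n))).symm ℓ with hwdef
  have hw : ∀ y : (EuclideanSpace ℝ (Fin n)), ⟪w, y⟫ = p (A.symm y) := fun y => by
    rw [hwdef]
    exact InnerProductSpace.toDual_symm_apply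
  have hpA : ∀ x : (EuclideanSpace ℝ (Fin n)), p x = ⟪w, A x⟫ := fun x => by
    rw [hw (A x), A.symm_apply_apply]
  -- membership characterization
  have hmemC : ∀ x : (EuclideanSpace ℝ (Fin n)), x ∈ K ↔ C x + 4 * p x ≤ 4 := by
    intro x
    rw [hmem x, hCfg x]
    simp only [hp]
    rw [← h1 x]
    have ha := hfnn x
    have hb := hfnn (-x)
    constructor
    · intro h
      nlinarith [mul_nonneg (sub_nonneg.mpr h) hb]
    · intro h
      nlinarith [hb, ha]
  set r : ℝ := Real.sqrt (4 + 4 * ‖w‖ ^ 2) with hrdef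
  have hr : 0 < r := Real.sqrt_pos.mpr (by positivity)
  have hr2 : r ^ 2 = 4 + 4 * ‖w‖ ^ 2 := Real.sq_sqrt (by positivity)
  have hball : ∀ x : (EuclideanSpace ℝ (Fin n)), x ∈ K ↔ ‖A x + (2 : ℝ) • w‖ ≤ r := by
    intro x
    rw [hmemC x, hA x, hpA x]
    have hexp : ‖A x + (2 : ℝ) • w‖ ^ 2 = ‖A x‖ ^ 2 + 4 * ⟪w, A x⟫ + 4 * ‖w‖ ^ 2 := by
      rw [norm_add_sq_real, real_inner_smul_right, norm_smul, real_inner_comm]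
      simp [Real.norm_eq_abs]
      ring
    constructor
    · intro h
      have h2' : ‖A x + (2 : ℝ) • w‖ ^ 2 ≤ r ^ 2 := by rw [hexp, hr2]; linarith
      nlinarith [norm_nonneg (A x + (2 : ℝ) • w), hr, h2']
    · intro h
      have h2' : ‖A x + (2 : ℝ) • w‖ ^ 2 ≤ r ^ 2 := by
        nlinarith [norm_nonneg (A x + (2 : ℝ) • w), hr.le, h]
      rw [hexp, hr2] at h2'
      linarith
  -- build the affine equivalence
  let T : (EuclideanSpace ℝ (Fin n)) ≃ᵃ[ℝ] (EuclideanSpace ℝ (Fin n)) :=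
    (((LinearEquiv.smulOfNeZero ℝ (EuclideanSpace ℝ (Fin n)) r hr.ne').toAffineEquiv.trans
      (AffineEquiv.constVAdd ℝ (EuclideanSpace ℝ (Fin n)) (-((2 : ℝ) • w))))).trans A.symm.toAffineEquiv
  have hT : ∀ y : (EuclideanSpace ℝ (Fin n)), T y = A.symm (-((2 : ℝ) • w) + r • y) := fun y => rfl
  refine ⟨T, Set.ext fun x => ?_⟩
  rw [hball x]
  constructor
  · intro hx
    refine ⟨r⁻¹ • (A x + (2 : ℝ) • w), ?_, ?_⟩
    · rw [Metric.mem_closedBall, dist_zero_right, norm_smul, Real.norm_eq_abs,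
        abs_of_pos (inv_pos.mpr hr)]
      rw [inv_mul_le_iff₀ hr, mul_one]
      exact hx
    · rw [hT, smul_smul, mul_inv_cancel₀ hr.ne', one_smul]
      have : -((2 : ℝ) • w) + (A x + (2 : ℝ) • w) = A x := by abel
      rw [this, A.symm_apply_apply]
  · rintro ⟨y, hy, rfl⟩
    rw [Metric.mem_closedBall, dist_zero_right] at hy
    rw [hT, A.apply_symm_apply]
    have : -((2 : ℝ) • w) + r • y + (2 : ℝ) • w = r • y := by abel
    rw [this, norm_smul, Real.norm_eq_abs, abs_of_pos hr]
    calc r * ‖y‖ ≤ r * 1 := by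
          exact mul_le_mul_of_nonneg_left hy hr.le
      _ = r := mul_one r
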